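/- Let K and Y be heaps, α : Y → Aut_Heap(K) a heap homomorphism, and y ∈ Y an element with α_y = id_K. Then the ternary operation on K × Y defined by [(k₁,y₁),(k₂,y₂),(k₃,y₃)] = ([k₁, α_{[y₁,y₂,y]}(k₂), α_{[y₁,y₂,y]}(k₃)], [y₁,y₂,y₃]) makes K × Y a heap, and for each fixed k ∈ K the map f(a,b) = (k,b) is an idempotent heap endomorphism of K × Y. -/
import Mathlib


/-- A heap: a set with an associative Mal'tsev ternary operation. -/
structure Heap (X : Type*) where
  op : X → X → X → X
  mal1 : ∀ x y, op x x y = y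
  mal2 : ∀ x y, op x y y = x
  assoc : ∀ x y z w u, op (op x y z) w u = op x y (op z w u)

/-- Let `K` and `Y` be heaps, `α : Y → Aut_Heap(K)` a heap homomorphism (into the
heap of heap automorphisms of `K`, with operation `[f,g,h] = f ∘ g⁻¹ ∘ h`), and
`y ∈ Y` with `α_y = id`. Then the ternary operation
`[(k₁,y₁),(k₂,y₂),(k₃,y₃)] = ([k₁, α_{[y₁,y₂,y]}(k₂), α_{[y₁,y₂,y]}(k₃)], [y₁,y₂,y₃])`
makes `K × Y` a heap, and for each `k ∈ K` the map `f(a,b) = (k,b)` is an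
idempotent heap endomorphism of `K × Y`. -/
theorem stmt14 {K Y : Type*} (HK : Heap K) (HY : Heap Y)
    (al : Y → Equiv.Perm K)
    (hal_endo : ∀ b k₁ k₂ k₃, al b (HK.op k₁ k₂ k₃) = HK.op (al b k₁) (al b k₂) (al b k₃))
    (hal_hom : ∀ b₁ b₂ b₃ k, al (HY.op b₁ b₂ b₃) k = al b₁ ((al b₂).symm (al b₃ k)))
    (y : Y) (hy : al y = Equiv.refl K)
    (op3 : K × Y → K × Y → K × Y → K × Y)
    (hop3 : ∀ p₁ p₂ p₃ : K × Y, op3 p₁ p₂ p₃ =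
      (HK.op p₁.1 (al (HY.op p₁.2 p₂.2 y) p₂.1) (al (HY.op p₁.2 p₂.2 y) p₃.1),
        HY.op p₁.2 p₂.2 p₃.2)) :
    (∃ E : Heap (K × Y), E.op = op3) ∧
    (∀ k : K,
      ((fun p : K × Y => ((k, p.2) : K × Y)) ∘ (fun p : K × Y => ((k, p.2) : K × Y))
        = fun p : K × Y => ((k, p.2) : K × Y)) ∧
      (∀ p₁ p₂ p₃ : K × Y,
        (fun p : K × Y => ((k, p.2) : K × Y)) (op3 p₁ p₂ p₃)
          = op3 ((fun p : K × Y => ((k, p.2) : K × Y)) p₁)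
              ((fun p : K × Y => ((k, p.2) : K × Y)) p₂)
              ((fun p : K × Y => ((k, p.2) : K × Y)) p₃))) := by
  constructor
  · refine ⟨⟨op3, ?_, ?_, ?_⟩, rfl⟩
    · intro p q; simp [hop3, HY.mal1, hy, HK.mal1]
    · intro p q; simp [hop3, HY.mal2, HK.mal2]
    · intro p q r s t
      simp [hop3, hal_endo, HK.assoc, HY.assoc, hal_hom, hy]
  · intro k
    refine ⟨rfl, ?_⟩
    intro p₁ p₂ p₃
    simp [hop3, HK.mal2]
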